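/- Uniform law of large numbers: sup_{a ∈ M} |(1/N) Σ_{j=1}^N X_j(a) − E[X(a)]| converges to 0 almost surely as N → ∞. -/

import Mathlib

open MeasureTheory Filter Topology ProbabilityTheory

noncomputable section

section OscAux

open TopologicalSpace

variable {M : Type*} [MetricSpace M] [CompactSpace M] [Nonempty M]

/-- Modulus-of-continuity type functional: the supremum of `|f x - f y|` over pairs of points
of the dense sequence at distance `< δ`. -/
noncomputable def oscMod (δ : ℝ) (f : M → ℝ) : ℝ :=
  ⨆ p : ℕ × ℕ, if dist (denseSeq M p.1) (denseSeq M p.2) < δ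
    then |f (denseSeq M p.1) - f (denseSeq M p.2)| else 0

lemma oscMod_measurable (δ : ℝ) : Measurable (oscMod (M := M) δ) := by
  apply Measurable.iSup
  rintro ⟨i, j⟩
  by_cases h : dist (denseSeq M i) (denseSeq M j) < δ
  · simpa only [if_pos h, Pi.sub_apply] using
      ((measurable_pi_apply (denseSeq M i)).sub (measurable_pi_apply (denseSeq M j))).abs
  · simpa only [if_neg h] using (measurable_const : Measurable fun _ : M → ℝ => (0 : ℝ))

lemma oscMod_le {δ C : ℝ} {f : M → ℝ} (hC : 0 ≤ C)
    (h : ∀ i j : ℕ, dist (denseSeq M i) (denseSeq M j) < δ →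
      |f (denseSeq M i) - f (denseSeq M j)| ≤ C) : oscMod δ f ≤ C := by
  apply ciSup_le
  rintro ⟨i, j⟩
  by_cases hd : dist (denseSeq M i) (denseSeq M j) < δ
  · simpa only [if_pos hd] using h i j hd
  · simpa only [if_neg hd] using hC

lemma oscMod_le_of_bound {δ C : ℝ} {f : M → ℝ}
    (h : ∀ n, |f (denseSeq M n)| ≤ C) : oscMod δ f ≤ 2 * C := by
  have hC : 0 ≤ C := le_trans (abs_nonneg _) (h 0)
  refine oscMod_le (by linarith) fun i j _ => ?_
  calc |f (denseSeq M i) - f (denseSeq M j)| ≤ |f (denseSeq M i)| + |f (denseSeq M j)| :=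
        abs_sub _ _
    _ ≤ C + C := add_le_add (h i) (h j)
    _ = 2 * C := (two_mul C).symm

lemma oscMod_bddAbove {δ C : ℝ} {f : M → ℝ} (h : ∀ n, |f (denseSeq M n)| ≤ C) :
    BddAbove (Set.range fun p : ℕ × ℕ =>
      if dist (denseSeq M p.1) (denseSeq M p.2) < δ
        then |f (denseSeq M p.1) - f (denseSeq M p.2)| else 0) := by
  have hC : 0 ≤ C := le_trans (abs_nonneg _) (h 0)
  refine ⟨2 * C, ?_⟩
  rintro x ⟨⟨i, j⟩, rfl⟩
  by_cases hd : dist (denseSeq M i) (denseSeq M j) < δ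
  · simp only [if_pos hd]
    calc |f (denseSeq M i) - f (denseSeq M j)| ≤ |f (denseSeq M i)| + |f (denseSeq M j)| :=
          abs_sub _ _
      _ ≤ C + C := add_le_add (h i) (h j)
      _ = 2 * C := (two_mul C).symm
  · simp only [if_neg hd]
    linarith

lemma oscMod_nonneg {δ C : ℝ} {f : M → ℝ} (h : ∀ n, |f (denseSeq M n)| ≤ C) :
    0 ≤ oscMod δ f := by
  have := le_ciSup (oscMod_bddAbove (δ := δ) h) ((0, 0) : ℕ × ℕ)
  simp only [sub_self, abs_zero, ite_self] at this
  exact this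

lemma exists_bound_of_continuous {f : M → ℝ} (hf : Continuous f) :
    ∃ C : ℝ, ∀ x : M, |f x| ≤ C := by
  obtain ⟨C, hC⟩ := (isCompact_range (hf.abs)).bddAbove
  exact ⟨C, fun x => hC (Set.mem_range_self x)⟩

lemma le_oscMod {δ : ℝ} {f : M → ℝ} (hf : Continuous f) {a b : M} (hab : dist a b < δ) :
    |f a - f b| ≤ oscMod δ f := by
  obtain ⟨C, hC⟩ := exists_bound_of_continuous hf
  have hbdd := oscMod_bddAbove (δ := δ) (f := f) (fun n => hC _)
  refine le_of_forall_pos_le_add fun ε hε => ?_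
  obtain ⟨ra, hra, hfa⟩ := Metric.continuous_iff.1 hf a (ε / 2) (by positivity)
  obtain ⟨rb, hrb, hfb⟩ := Metric.continuous_iff.1 hf b (ε / 2) (by positivity)
  have hδd : 0 < (δ - dist a b) / 2 := by linarith
  obtain ⟨i, hi⟩ := Metric.denseRange_iff.1 (denseRange_denseSeq M) a
    (min ra ((δ - dist a b) / 2)) (lt_min hra hδd)
  obtain ⟨j, hj⟩ := Metric.denseRange_iff.1 (denseRange_denseSeq M) b
    (min rb ((δ - dist a b) / 2)) (lt_min hrb hδd)
  have hij : dist (denseSeq M i) (denseSeq M j) < δ := by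
    have h1 : dist a (denseSeq M i) < (δ - dist a b) / 2 := lt_of_lt_of_le hi (min_le_right _ _)
    have h2 : dist b (denseSeq M j) < (δ - dist a b) / 2 := lt_of_lt_of_le hj (min_le_right _ _)
    calc dist (denseSeq M i) (denseSeq M j)
        ≤ dist (denseSeq M i) a + dist a b + dist b (denseSeq M j) := dist_triangle4 _ _ _ _
      _ = dist a (denseSeq M i) + dist a b + dist b (denseSeq M j) := by rw [dist_comm (denseSeq M i) a]
      _ < (δ - dist a b) / 2 + dist a b + (δ - dist a b) / 2 := by linarith
      _ = δ := by ring
  have hmid : |f (denseSeq M i) - f (denseSeq M j)| ≤ oscMod δ f := by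
    have := le_ciSup hbdd ((i, j) : ℕ × ℕ)
    simp only [if_pos hij] at this; exact this
  have hia : |f (denseSeq M i) - f a| < ε / 2 := by
    rw [dist_comm] at hi
    have := hfa (denseSeq M i) (lt_of_lt_of_le hi (min_le_left _ _))
    rwa [Real.dist_eq] at this
  have hjb : |f (denseSeq M j) - f b| < ε / 2 := by
    rw [dist_comm] at hj
    have := hfb (denseSeq M j) (lt_of_lt_of_le hj (min_le_left _ _))
    rwa [Real.dist_eq] at this
  have tri : |f a - f b| ≤ |f a - f (denseSeq M i)| + |f (denseSeq M i) - f (denseSeq M j)|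
      + |f (denseSeq M j) - f b| := by
    calc |f a - f b| ≤ |f a - f (denseSeq M j)| + |f (denseSeq M j) - f b| := abs_sub_le _ _ _
      _ ≤ (|f a - f (denseSeq M i)| + |f (denseSeq M i) - f (denseSeq M j)|)
          + |f (denseSeq M j) - f b| := by
            have := abs_sub_le (f a) (f (denseSeq M i)) (f (denseSeq M j))
            linarith
  rw [abs_sub_comm (f a) (f (denseSeq M i))] at tri
  linarith

lemma oscMod_tendsto {f : M → ℝ} (hf : Continuous f) :
    Tendsto (fun m : ℕ => oscMod (1 / (m + 1) : ℝ) f) atTop (𝓝 0) := by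
  obtain ⟨C, hC⟩ := exists_bound_of_continuous hf
  rw [Metric.tendsto_atTop]
  intro ε hε
  obtain ⟨δ0, hδ0, hf0⟩ := Metric.uniformContinuous_iff.1
    (CompactSpace.uniformContinuous_of_continuous hf) (ε / 2) (by positivity)
  obtain ⟨m0, hm0⟩ : ∃ m0 : ℕ, (1 / (m0 + 1) : ℝ) < δ0 := exists_nat_one_div_lt hδ0
  refine ⟨m0, fun m hm => ?_⟩
  have h1 : (1 / (m + 1) : ℝ) ≤ 1 / (m0 + 1) := by
    apply one_div_le_one_div_of_le
    · positivity
    · exact_mod_cast Nat.add_le_add_right hm 1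
  have hle : oscMod (1 / (m + 1) : ℝ) f ≤ ε / 2 := by
    refine oscMod_le (by positivity) fun i j hd => ?_
    have := hf0 (lt_of_lt_of_le hd (h1.trans hm0.le))
    rw [Real.dist_eq] at this
    exact this.le
  have hnn : 0 ≤ oscMod (1 / (m + 1) : ℝ) f := oscMod_nonneg fun n => hC _
  rw [Real.dist_0_eq_abs, abs_of_nonneg hnn]
  linarith

end OscAux

/-- **Uniform law of large numbers.**
Let `M` be a compact metric space and `(X_j)` an i.i.d. sequence of random
functions on `M` (copies of `X_0`), almost surely continuous, and dominated by an
integrable random variable `g`: `|X_0(a)| ≤ g` a.s. for every `a ∈ M`. Then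
`sup_{a ∈ M} |(1/N) ∑_{j<N} X_j(a) − E[X_0(a)]| → 0` almost surely. -/
theorem uniform_law_of_large_numbers
    {Ω : Type*} [MeasurableSpace Ω] (P : Measure Ω) [IsProbabilityMeasure P]
    {M : Type*} [MetricSpace M] [CompactSpace M]
    (Xf : ℕ → Ω → M → ℝ)
    (hmeas : ∀ j, Measurable (Xf j))
    (hindep : iIndepFun Xf P)
    (hident : ∀ j, IdentDistrib (Xf j) (Xf 0) P P)
    (hcont : ∀ j, ∀ᵐ ω ∂P, Continuous (Xf j ω))
    (g : Ω → ℝ) (hg_int : Integrable g P) (hg_nonneg : ∀ ω, 0 ≤ g ω)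
    (hdom : ∀ a : M, ∀ᵐ ω ∂P, |Xf 0 ω a| ≤ g ω) :
    ∀ᵐ ω ∂P,
      Tendsto (fun N : ℕ =>
          ⨆ a : M, |(N : ℝ)⁻¹ * ∑ j ∈ Finset.range N, Xf j ω a - ∫ ω', Xf 0 ω' a ∂P|)
        atTop (𝓝 0) := by
  classical
  rcases isEmpty_or_nonempty M with hM | hM
  · filter_upwards with ω
    simp only [Real.iSup_of_isEmpty]
    exact tendsto_const_nhds
  set u : ℕ → M := TopologicalSpace.denseSeq M with hu_def
  set EX : M → ℝ := fun a => ∫ ω', Xf 0 ω' a ∂P with hEX_def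
  have heval : ∀ a : M, Measurable fun f : M → ℝ => f a := fun a => measurable_pi_apply a
  have hXa_meas : ∀ j (a : M), Measurable fun ω => Xf j ω a :=
    fun j a => (heval a).comp (hmeas j)
  have hXa_int : ∀ a : M, Integrable (fun ω => Xf 0 ω a) P := fun a =>
    Integrable.mono' hg_int ((hXa_meas 0 a).aestronglyMeasurable)
      ((hdom a).mono fun ω h => by rwa [Real.norm_eq_abs])
  -- pointwise strong law
  have hSLLN : ∀ a : M, ∀ᵐ ω ∂P,
      Tendsto (fun N : ℕ => (∑ j ∈ Finset.range N, Xf j ω a) / N) atTop (𝓝 (EX a)) := by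
    intro a
    exact strong_law_ae_real (fun j ω => Xf j ω a) (hXa_int a)
      (fun i j hij => (hindep.indepFun hij).comp (heval a) (heval a))
      (fun j => (hident j).comp (heval a))
  -- the oscillation processes
  set H : ℕ → ℕ → Ω → ℝ := fun m j ω => oscMod (1 / (m + 1) : ℝ) (Xf j ω) with hH_def
  have hH_meas : ∀ m j, Measurable (H m j) :=
    fun m j => (oscMod_measurable (M := M) (1 / (m + 1) : ℝ)).comp (hmeas j)
  have hdomD : ∀ᵐ ω ∂P, ∀ n : ℕ, |Xf 0 ω (u n)| ≤ g ω := ae_all_iff.2 fun n => hdom (u n)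
  have hH_bound : ∀ m, ∀ᵐ ω ∂P, ‖H m 0 ω‖ ≤ 2 * g ω := by
    intro m
    filter_upwards [hdomD] with ω hω
    rw [Real.norm_eq_abs, abs_of_nonneg (oscMod_nonneg hω)]
    exact oscMod_le_of_bound hω
  have hH_nonneg : ∀ m, ∀ᵐ ω ∂P, 0 ≤ H m 0 ω := by
    intro m
    filter_upwards [hdomD] with ω hω
    exact oscMod_nonneg hω
  have hH_int : ∀ m, Integrable (H m 0) P := fun m =>
    Integrable.mono' (hg_int.const_mul 2) (hH_meas m 0).aestronglyMeasurable (hH_bound m)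
  have hHSLLN : ∀ m : ℕ, ∀ᵐ ω ∂P,
      Tendsto (fun N : ℕ => (∑ j ∈ Finset.range N, H m j ω) / N) atTop
        (𝓝 (∫ ω', H m 0 ω' ∂P)) := fun m =>
    strong_law_ae_real (H m) (hH_int m)
      (fun i j hij => (hindep.indepFun hij).comp (oscMod_measurable _) (oscMod_measurable _))
      (fun j => (hident j).comp (oscMod_measurable _))
  -- dominated convergence: the expected oscillation tends to 0
  have hDCT : Tendsto (fun m : ℕ => ∫ ω', H m 0 ω' ∂P) atTop (𝓝 0) := by
    have h0 : Tendsto (fun m : ℕ => ∫ ω', H m 0 ω' ∂P) atTop (𝓝 (∫ _ω', (0 : ℝ) ∂P)) := by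
      apply tendsto_integral_of_dominated_convergence (fun ω => 2 * g ω)
        (fun m => (hH_meas m 0).aestronglyMeasurable) (hg_int.const_mul 2) hH_bound
      filter_upwards [hcont 0] with ω hω
      exact oscMod_tendsto hω
    simpa using h0
  -- difference of means bounded by expected oscillation
  have hEXdiff : ∀ m : ℕ, ∀ a b : M, dist a b < 1 / (m + 1) →
      |EX a - EX b| ≤ ∫ ω', H m 0 ω' ∂P := by
    intro m a b hab
    have h1 : EX a - EX b = ∫ ω', (Xf 0 ω' a - Xf 0 ω' b) ∂P :=
      (integral_sub (hXa_int a) (hXa_int b)).symm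
    rw [← Real.norm_eq_abs, h1]
    apply norm_integral_le_of_norm_le (hH_int m)
    filter_upwards [hcont 0] with ω hω
    rw [Real.norm_eq_abs]
    exact le_oscMod hω hab
  -- finite nets
  have hnet' : ∀ m : ℕ, ∃ t : Finset M, ∀ a : M, ∃ b ∈ t, dist a b < 1 / (m + 1) := by
    intro m
    have hpos : (0 : ℝ) < 1 / (m + 1) := by positivity
    obtain ⟨t, ht⟩ := isCompact_univ.elim_finite_subcover
      (fun b : M => Metric.ball b (1 / (m + 1)))
      (fun b => Metric.isOpen_ball)
      (fun a _ => Set.mem_iUnion.2 ⟨a, Metric.mem_ball_self hpos⟩)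
    refine ⟨t, fun a => ?_⟩
    rcases Set.mem_iUnion₂.1 (ht (Set.mem_univ a)) with ⟨b, hb, hab⟩
    exact ⟨b, hb, Metric.mem_ball.1 hab⟩
  choose net hnet using hnet'
  -- the almost sure events
  have hA : ∀ᵐ ω ∂P, ∀ m : ℕ, ∀ b ∈ net m,
      Tendsto (fun N : ℕ => (∑ j ∈ Finset.range N, Xf j ω b) / N) atTop (𝓝 (EX b)) :=
    ae_all_iff.2 fun m => (ae_ball_iff (net m).countable_toSet).2 fun b _ => hSLLN b
  have hB : ∀ᵐ ω ∂P, ∀ m : ℕ,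
      Tendsto (fun N : ℕ => (∑ j ∈ Finset.range N, H m j ω) / N) atTop
        (𝓝 (∫ ω', H m 0 ω' ∂P)) := ae_all_iff.2 hHSLLN
  have hCont : ∀ᵐ ω ∂P, ∀ j, Continuous (Xf j ω) := ae_all_iff.2 hcont
  filter_upwards [hA, hB, hCont] with ω hAω hBω hCω
  rw [Metric.tendsto_atTop]
  intro ε hε
  -- choose the scale m
  obtain ⟨m, hm⟩ : ∃ m : ℕ, ∫ ω', H m 0 ω' ∂P < ε / 8 :=
    (hDCT.eventually (gt_mem_nhds (show (0 : ℝ) < ε / 8 by positivity))).exists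
  -- the eventual bounds in N
  have E1 : ∀ᶠ N : ℕ in atTop, ∀ b ∈ net m,
      |(∑ j ∈ Finset.range N, Xf j ω b) / N - EX b| < ε / 8 := by
    rw [eventually_all_finset]
    intro b hb
    have h := Metric.tendsto_atTop.1 (hAω m b hb) (ε / 8) (by positivity)
    obtain ⟨N0, hN0⟩ := h
    refine eventually_atTop.2 ⟨N0, fun N hN => ?_⟩
    have := hN0 N hN
    rwa [Real.dist_eq] at this
  have E2 : ∀ᶠ N : ℕ in atTop,
      (∑ j ∈ Finset.range N, H m j ω) / N < ε / 4 := by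
    have h := Metric.tendsto_atTop.1 (hBω m) (ε / 8) (by positivity)
    obtain ⟨N0, hN0⟩ := h
    refine eventually_atTop.2 ⟨N0, fun N hN => ?_⟩
    have h2 := hN0 N hN
    rw [Real.dist_eq] at h2
    have := abs_lt.1 h2
    linarith [this.1, this.2]
  obtain ⟨N0, hN0⟩ := eventually_atTop.1 (E1.and E2)
  refine ⟨N0, fun N hN => ?_⟩
  obtain ⟨hN1, hN2⟩ := hN0 N hN
  -- the key pointwise bound
  have key : ∀ a : M,
      |(N : ℝ)⁻¹ * ∑ j ∈ Finset.range N, Xf j ω a - EX a| ≤ ε / 8 + ε / 4 + ε / 8 := by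
    intro a
    obtain ⟨b, hb, hab⟩ := hnet m a
    have t1 : |(N : ℝ)⁻¹ * ∑ j ∈ Finset.range N, Xf j ω a
        - (N : ℝ)⁻¹ * ∑ j ∈ Finset.range N, Xf j ω b|
        ≤ (∑ j ∈ Finset.range N, H m j ω) / N := by
      rw [← mul_sub, ← Finset.sum_sub_distrib, abs_mul,
        abs_of_nonneg (inv_nonneg.2 (Nat.cast_nonneg N)), div_eq_inv_mul]
      apply mul_le_mul_of_nonneg_left _ (inv_nonneg.2 (Nat.cast_nonneg N))
      calc |∑ j ∈ Finset.range N, (Xf j ω a - Xf j ω b)|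
          ≤ ∑ j ∈ Finset.range N, |Xf j ω a - Xf j ω b| := Finset.abs_sum_le_sum_abs _ _
        _ ≤ ∑ j ∈ Finset.range N, H m j ω :=
            Finset.sum_le_sum fun j _ => le_oscMod (hCω j) hab
    have t2 : |(N : ℝ)⁻¹ * ∑ j ∈ Finset.range N, Xf j ω b - EX b| < ε / 8 := by
      have := hN1 b hb
      rwa [div_eq_inv_mul] at this
    have t3 : |EX b - EX a| < ε / 8 := by
      refine lt_of_le_of_lt (hEXdiff m b a ?_) hm
      rwa [dist_comm]
    have tri : |(N : ℝ)⁻¹ * ∑ j ∈ Finset.range N, Xf j ω a - EX a|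
        ≤ |(N : ℝ)⁻¹ * ∑ j ∈ Finset.range N, Xf j ω a
            - (N : ℝ)⁻¹ * ∑ j ∈ Finset.range N, Xf j ω b|
          + |(N : ℝ)⁻¹ * ∑ j ∈ Finset.range N, Xf j ω b - EX b|
          + |EX b - EX a| := by
      calc |(N : ℝ)⁻¹ * ∑ j ∈ Finset.range N, Xf j ω a - EX a|
          ≤ |(N : ℝ)⁻¹ * ∑ j ∈ Finset.range N, Xf j ω a - EX b| + |EX b - EX a| :=
            abs_sub_le _ _ _
        _ ≤ (|(N : ℝ)⁻¹ * ∑ j ∈ Finset.range N, Xf j ω a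
              - (N : ℝ)⁻¹ * ∑ j ∈ Finset.range N, Xf j ω b|
            + |(N : ℝ)⁻¹ * ∑ j ∈ Finset.range N, Xf j ω b - EX b|) + |EX b - EX a| := by
            have := abs_sub_le ((N : ℝ)⁻¹ * ∑ j ∈ Finset.range N, Xf j ω a)
              ((N : ℝ)⁻¹ * ∑ j ∈ Finset.range N, Xf j ω b) (EX b)
            linarith
    linarith
  have hbdd : BddAbove (Set.range fun a : M =>
      |(N : ℝ)⁻¹ * ∑ j ∈ Finset.range N, Xf j ω a - EX a|) := by
    refine ⟨ε / 8 + ε / 4 + ε / 8, ?_⟩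
    rintro x ⟨a, rfl⟩
    exact key a
  have hsup_le : (⨆ a : M, |(N : ℝ)⁻¹ * ∑ j ∈ Finset.range N, Xf j ω a - EX a|)
      ≤ ε / 8 + ε / 4 + ε / 8 := ciSup_le key
  have hsup_nonneg : 0 ≤ ⨆ a : M, |(N : ℝ)⁻¹ * ∑ j ∈ Finset.range N, Xf j ω a - EX a| :=
    le_trans (abs_nonneg _) (le_ciSup hbdd (Classical.arbitrary M))
  rw [Real.dist_0_eq_abs, abs_of_nonneg hsup_nonneg]
  linarith
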